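/- Let F be a finite extension of ℚ₂ with ring of integers O_F, π₀ ∈ O_F a uniformizer, and t ∈ O_F with π₀ ∣ t and t ∣ 2; set s = t/π₀ ∈ O_F and k = O_F/(π₀). Let A = O_F[y₁₁, y₁₂, y₂₁, y₂₂]/I, where I is the ideal generated by the six elements y₁₁ + y₂₂ − t, y₁₁·y₂₂ − y₁₂·y₂₁ − π₀, t·(s·y₂₂ + 2), y₁₁·(s·y₂₂ + 2), y₂₁·(s·y₂₂ + 2), and y₁₂·(s·y₂₂ + 2). Then the ideal m of A generated by the images of π₀, y₁₁, y₁₂, y₂₁, y₂₂ is a maximal ideal with residue field A/m ≅ k, and the k-vector space m/m² has dimension exactly 3. (This is the tangent-space computation showing that the deformation space of an intersection point of the naive moduli space 𝒩_E^naive in the (R-U) case has 3-dimensional tangent space, whereas the Drinfeld moduli space is regular of dimension 2.) -/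

import Mathlib

set_option synthInstance.maxHeartbeats 1000000
set_option maxHeartbeats 4000000

noncomputable section

open MvPolynomial

/-- The ideal of relations of the deformation ring of an intersection point of
`𝒩_E^naive` in the (R-U) case: it is generated by `y₁₁ + y₂₂ − t`,
`y₁₁·y₂₂ − y₁₂·y₂₁ − π₀`, `t·(s·y₂₂ + 2)`, `y₁₁·(s·y₂₂ + 2)`, `y₂₁·(s·y₂₂ + 2)` and
`y₁₂·(s·y₂₂ + 2)`, where `y₁₁ = X 0`, `y₁₂ = X 1`, `y₂₁ = X 2`, `y₂₂ = X 3`. -/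
def deformationIdeal (R : Type*) [CommRing R] (π₀ t s : R) :
    Ideal (MvPolynomial (Fin 4) R) :=
  Ideal.span
    {X 0 + X 3 - C t,
     X 0 * X 3 - X 1 * X 2 - C π₀,
     C t * (C s * X 3 + 2),
     X 0 * (C s * X 3 + 2),
     X 2 * (C s * X 3 + 2),
     X 1 * (C s * X 3 + 2)}

/-- The deformation ring `A = O_F[y₁₁, y₁₂, y₂₁, y₂₂]/I`. -/
def deformationRing (R : Type*) [CommRing R] (π₀ t s : R) : Type _ :=
  MvPolynomial (Fin 4) R ⧸ deformationIdeal R π₀ t s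

noncomputable instance (R : Type*) [CommRing R] (π₀ t s : R) :
    CommRing (deformationRing R π₀ t s) :=
  inferInstanceAs (CommRing (MvPolynomial (Fin 4) R ⧸ deformationIdeal R π₀ t s))

/-- The ideal `m` of `A` generated by (the images of) `π₀` and the variables `y_{ij}`. -/
def deformationMaxIdeal (R : Type*) [CommRing R] (π₀ t s : R) :
    Ideal (deformationRing R π₀ t s) :=
  Ideal.span
    (insert ((Ideal.Quotient.mk (deformationIdeal R π₀ t s)) (C π₀))
      (Set.range fun i : Fin 4 =>
        (Ideal.Quotient.mk (deformationIdeal R π₀ t s)) (X i)))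

private lemma sub_constantCoeff_mem {R : Type*} [CommRing R] {σ : Type*} (p : MvPolynomial σ R) :
    p - C (constantCoeff p) ∈ Ideal.span (Set.range (X : σ → MvPolynomial σ R)) := by
  induction p using MvPolynomial.induction_on with
  | C a => simp
  | add p q hp hq =>
      have := Ideal.add_mem _ hp hq
      convert this using 1
      simp only [map_add, C_add]; ring
  | mul_X p i hp =>
      simp only [map_mul, constantCoeff_X, mul_zero, map_zero, sub_zero]
      exact Ideal.mul_mem_left _ _ (Ideal.subset_span ⟨i, rfl⟩)

private theorem deformation_general_aux {O : Type*} [CommRing O] (π₀ t s : O)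
    (hmax : (Ideal.span {π₀} : Ideal O).IsMaximal)
    (hπt : π₀ ∣ t) (ht2 : t ∣ 2) (hs : π₀ * s = t) :
    (deformationMaxIdeal O π₀ t s).IsMaximal ∧
    Nonempty ((deformationRing O π₀ t s ⧸ deformationMaxIdeal O π₀ t s) ≃+*
      (O ⧸ (Ideal.span {π₀} : Ideal O))) ∧
    Module.finrank (deformationRing O π₀ t s ⧸ deformationMaxIdeal O π₀ t s)
      (deformationMaxIdeal O π₀ t s).Cotangent = 3 := by
  let kk := O ⧸ (Ideal.span {π₀} : Ideal O)
  let mkk : O →+* kk := Ideal.Quotient.mk _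
  letI : Field kk := Ideal.Quotient.field _
  have hπ2O : π₀ ∣ 2 := hπt.trans ht2
  have hmkkt : mkk t = 0 := Ideal.Quotient.eq_zero_iff_mem.2 (Ideal.mem_span_singleton.2 hπt)
  have hmkkπ : mkk π₀ = 0 := Ideal.Quotient.eq_zero_iff_mem.2 (Ideal.mem_span_singleton.2 dvd_rfl)
  have hmkk2 : mkk 2 = 0 := Ideal.Quotient.eq_zero_iff_mem.2 (Ideal.mem_span_singleton.2 hπ2O)
  -- the residue map
  let φ : MvPolynomial (Fin 4) O →+* kk := mkk.comp constantCoeff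
  have hIφ : deformationIdeal O π₀ t s ≤ RingHom.ker φ := by
    rw [deformationIdeal, Ideal.span_le]
    rintro x (rfl | rfl | rfl | rfl | rfl | rfl) <;>
      simp_all [φ, RingHom.mem_ker, hmkkt, hmkkπ, hmkk2, mul_comm]
  let ψ : deformationRing O π₀ t s →+* kk := Ideal.Quotient.lift _ φ hIφ
  have hψ : ∀ p : MvPolynomial (Fin 4) O,
      ψ (Ideal.Quotient.mk (deformationIdeal O π₀ t s) p) = mkk (constantCoeff p) :=
    fun p => Ideal.Quotient.lift_mk _ φ hIφ
  have hψs : Function.Surjective ψ := by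
    intro c
    obtain ⟨r, rfl⟩ := Ideal.Quotient.mk_surjective c
    exact ⟨Ideal.Quotient.mk _ (C r), by simp [hψ]; rfl⟩
  have hker : RingHom.ker ψ = deformationMaxIdeal O π₀ t s := by
    apply le_antisymm
    · intro x hx
      obtain ⟨p, rfl⟩ := Ideal.Quotient.mk_surjective x
      replace hx : ψ (Ideal.Quotient.mk (deformationIdeal O π₀ t s) p) = 0 := hx
      rw [hψ] at hx
      obtain ⟨u, hu⟩ : π₀ ∣ constantCoeff p :=
        Ideal.mem_span_singleton.1 (Ideal.Quotient.eq_zero_iff_mem.1 hx)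
      have h1 : Ideal.Quotient.mk (deformationIdeal O π₀ t s) (p - C (constantCoeff p)) ∈
          deformationMaxIdeal O π₀ t s := by
        have hmem : p - C (constantCoeff p) ∈
            Ideal.span (Set.range (X : Fin 4 → MvPolynomial (Fin 4) O)) :=
          sub_constantCoeff_mem p
        have := Ideal.mem_map_of_mem (Ideal.Quotient.mk (deformationIdeal O π₀ t s)) hmem
        rw [Ideal.map_span] at this
        refine Ideal.span_le.2 ?_ this
        rintro y ⟨_, ⟨i, rfl⟩, rfl⟩
        exact Ideal.subset_span (Set.mem_insert_of_mem _ ⟨i, rfl⟩)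
      have h2 : Ideal.Quotient.mk (deformationIdeal O π₀ t s) (C (constantCoeff p)) ∈
          deformationMaxIdeal O π₀ t s := by
        rw [hu, C_mul, map_mul]
        rw [mul_comm]; exact Ideal.mul_mem_left _ _ (Ideal.subset_span (Set.mem_insert _ _))
      have := Ideal.add_mem _ h2 h1
      rw [map_sub] at this
      convert this using 1
      exact Iff.of_eq (congrArg (· ∈ deformationMaxIdeal O π₀ t s) (add_sub_cancel (Ideal.Quotient.mk (deformationIdeal O π₀ t s) (C (constantCoeff p)) :
        deformationRing O π₀ t s) (Ideal.Quotient.mk (deformationIdeal O π₀ t s) p)).symm)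
    · rw [deformationMaxIdeal, Ideal.span_le]
      rintro x (rfl | ⟨i, rfl⟩) <;> exact RingHom.mem_ker.2 (by simp [hψ, hmkkπ])
  have hmmax : (deformationMaxIdeal O π₀ t s).IsMaximal :=
    hker ▸ RingHom.ker_isMaximal_of_surjective ψ hψs
  refine ⟨hmmax, ⟨(Ideal.quotEquivOfEq hker.symm).trans
    (RingHom.quotientKerEquivOfSurjective hψs)⟩, ?_⟩
  -- notation
  have hXm : ∀ i : Fin 4, Ideal.Quotient.mk (deformationIdeal O π₀ t s) (X i) ∈
      deformationMaxIdeal O π₀ t s :=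
    fun i => Ideal.subset_span (Set.mem_insert_of_mem _ ⟨i, rfl⟩)
  have hπm : Ideal.Quotient.mk (deformationIdeal O π₀ t s) (C π₀) ∈
      deformationMaxIdeal O π₀ t s := Ideal.subset_span (Set.mem_insert _ _)
  have hrel : ∀ q ∈ deformationIdeal O π₀ t s,
      Ideal.Quotient.mk (deformationIdeal O π₀ t s) q = 0 :=
    fun q hq => Ideal.Quotient.eq_zero_iff_mem.2 hq
  have hg1 : Ideal.Quotient.mk (deformationIdeal O π₀ t s) (X 0 + X 3 - C t) = 0 :=
    hrel _ (Ideal.subset_span (by simp [deformationIdeal]))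
  have hg2 : Ideal.Quotient.mk (deformationIdeal O π₀ t s) (X 0 * X 3 - X 1 * X 2 - C π₀) = 0 :=
    hrel _ (Ideal.subset_span (by simp [deformationIdeal]))
  have hπ2 : Ideal.Quotient.mk (deformationIdeal O π₀ t s) (C π₀) ∈
      (deformationMaxIdeal O π₀ t s) ^ 2 := by
    have h : Ideal.Quotient.mk (deformationIdeal O π₀ t s) (C π₀) =
        Ideal.Quotient.mk (deformationIdeal O π₀ t s) (X 0) *
          Ideal.Quotient.mk (deformationIdeal O π₀ t s) (X 3) -
        Ideal.Quotient.mk (deformationIdeal O π₀ t s) (X 1) *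
          Ideal.Quotient.mk (deformationIdeal O π₀ t s) (X 2) := by
      have := hg2
      rw [map_sub, map_sub, map_mul, map_mul] at this
      linear_combination -this
    rw [h, pow_two]
    exact sub_mem (Ideal.mul_mem_mul (hXm 0) (hXm 3)) (Ideal.mul_mem_mul (hXm 1) (hXm 2))
  have htm2 : Ideal.Quotient.mk (deformationIdeal O π₀ t s) (C t) ∈
      (deformationMaxIdeal O π₀ t s) ^ 2 := by
    have h : (C t : MvPolynomial (Fin 4) O) = C π₀ * C s := by rw [← C_mul, hs]
    rw [h, map_mul]
    rw [mul_comm]; exact Ideal.mul_mem_left _ _ hπ2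
  -- cotangent generators
  let E : Fin 3 → (deformationMaxIdeal O π₀ t s).Cotangent :=
    ![(deformationMaxIdeal O π₀ t s).toCotangent
        ⟨Ideal.Quotient.mk (deformationIdeal O π₀ t s) (X 0), hXm 0⟩,
      (deformationMaxIdeal O π₀ t s).toCotangent
        ⟨Ideal.Quotient.mk (deformationIdeal O π₀ t s) (X 1), hXm 1⟩,
      (deformationMaxIdeal O π₀ t s).toCotangent
        ⟨Ideal.Quotient.mk (deformationIdeal O π₀ t s) (X 2), hXm 2⟩]
  -- spanning
  have hspan : ⊤ ≤ Submodule.span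
      (deformationRing O π₀ t s ⧸ deformationMaxIdeal O π₀ t s) (Set.range E) := by
    rintro x -
    obtain ⟨⟨y, hy⟩, rfl⟩ := Ideal.toCotangent_surjective _ x
    refine Submodule.span_induction
      (p := fun z _ => ∀ (hm : z ∈ deformationMaxIdeal O π₀ t s),
        (deformationMaxIdeal O π₀ t s).toCotangent ⟨z, hm⟩ ∈ Submodule.span
          (deformationRing O π₀ t s ⧸ deformationMaxIdeal O π₀ t s) (Set.range E))
      ?_ ?_ ?_ ?_ hy hy
    · rintro z (rfl | ⟨i, rfl⟩)
      · intro h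
        have h0 : (deformationMaxIdeal O π₀ t s).toCotangent
            ⟨Ideal.Quotient.mk (deformationIdeal O π₀ t s) (C π₀), h⟩ = 0 :=
          (Ideal.toCotangent_eq_zero _ _).2 hπ2
        rw [h0]; exact zero_mem _
      · intro h
        fin_cases i
        · exact Submodule.subset_span ⟨0, rfl⟩
        · exact Submodule.subset_span ⟨1, rfl⟩
        · exact Submodule.subset_span ⟨2, rfl⟩
        · -- X 3 = C t - X 0 in A
          show (deformationMaxIdeal O π₀ t s).toCotangent
            ⟨Ideal.Quotient.mk (deformationIdeal O π₀ t s) (X 3), h⟩ ∈ _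
          have htm : Ideal.Quotient.mk (deformationIdeal O π₀ t s) (C t) ∈
              deformationMaxIdeal O π₀ t s :=
            Ideal.pow_le_self two_ne_zero htm2
          have hX3 : Ideal.Quotient.mk (deformationIdeal O π₀ t s) (X 3) =
              Ideal.Quotient.mk (deformationIdeal O π₀ t s) (C t) -
              Ideal.Quotient.mk (deformationIdeal O π₀ t s) (X 0) := by
            have := hg1
            rw [map_sub, map_add] at this
            linear_combination this
          have key : (deformationMaxIdeal O π₀ t s).toCotangent
              ⟨Ideal.Quotient.mk (deformationIdeal O π₀ t s) (X 3), h⟩ =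
              (deformationMaxIdeal O π₀ t s).toCotangent
                (-(⟨Ideal.Quotient.mk (deformationIdeal O π₀ t s) (X 0), hXm 0⟩ :
                  deformationMaxIdeal O π₀ t s)) := by
            rw [Ideal.toCotangent_eq]
            have hcoe : ((⟨Ideal.Quotient.mk (deformationIdeal O π₀ t s) (X 3), h⟩ :
                  deformationMaxIdeal O π₀ t s) : deformationRing O π₀ t s) -
                ((-(⟨Ideal.Quotient.mk (deformationIdeal O π₀ t s) (X 0), hXm 0⟩ :
                  deformationMaxIdeal O π₀ t s) : deformationMaxIdeal O π₀ t s) :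
                    deformationRing O π₀ t s) =
                Ideal.Quotient.mk (deformationIdeal O π₀ t s) (C t) := by
              push_cast
              rw [hX3]
              exact (sub_neg_eq_add _ _).trans (sub_add_cancel _ _)
            rw [hcoe]
            exact htm2
          rw [key, map_neg]
          exact neg_mem (Submodule.subset_span ⟨0, rfl⟩)
    · intro h
      rw [show ((⟨0, h⟩ : deformationMaxIdeal O π₀ t s)) = 0 from rfl, map_zero]
      exact zero_mem _
    · intro u v hu' hv' pu pv h
      have hu : u ∈ deformationMaxIdeal O π₀ t s := hu'
      have hv : v ∈ deformationMaxIdeal O π₀ t s := hv'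
      rw [show (⟨u + v, h⟩ : deformationMaxIdeal O π₀ t s) = ⟨u, hu⟩ + ⟨v, hv⟩ from rfl, map_add]
      exact add_mem (pu hu) (pv hv)
    · intro a u hu' pu h
      have hu : u ∈ deformationMaxIdeal O π₀ t s := hu'
      have pu := pu hu
      rw [show (⟨a • u, h⟩ : deformationMaxIdeal O π₀ t s) = a • ⟨u, hu⟩ from rfl, map_smul,
        show a • (deformationMaxIdeal O π₀ t s).toCotangent ⟨u, hu⟩ =
          (Ideal.Quotient.mk (deformationMaxIdeal O π₀ t s) a) •
            (deformationMaxIdeal O π₀ t s).toCotangent ⟨u, hu⟩ from rfl]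
      exact Submodule.smul_mem _ _ pu
  -- dual number functionals
  have h2k : (2 : kk) = 0 := by
    rw [show (2 : kk) = mkk 2 from (map_ofNat mkk 2).symm, hmkk2]
  let f : O →+* DualNumber kk := (algebraMap kk (DualNumber kk)).comp mkk
  have h2D : (2 : DualNumber kk) = 0 := by
    rw [show (2 : DualNumber kk) = algebraMap kk (DualNumber kk) 2 from (map_ofNat _ 2).symm,
      h2k, map_zero]
  have hft : f t = 0 := by simp [f, hmkkt]
  have hfπ : f π₀ = 0 := by simp [f, hmkkπ]
  let Vd : Fin 3 → Fin 4 → DualNumber kk :=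
    ![![DualNumber.eps, 0, 0, -DualNumber.eps],
      ![0, DualNumber.eps, 0, 0],
      ![0, 0, DualNumber.eps, 0]]
  have hee : ∀ x : DualNumber kk, DualNumber.eps * (DualNumber.eps * x) = 0 := fun x => by
    rw [← mul_assoc, DualNumber.eps_mul_eps, zero_mul]
  let χ : Fin 3 → (MvPolynomial (Fin 4) O →+* DualNumber kk) := fun j => eval₂Hom f (Vd j)
  have hχI : ∀ j, deformationIdeal O π₀ t s ≤ RingHom.ker (χ j) := by
    intro j
    rw [deformationIdeal, Ideal.span_le]
    rintro x (rfl | rfl | rfl | rfl | rfl | rfl) <;> fin_cases j <;>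
      simp only [SetLike.mem_coe, RingHom.mem_ker, χ, Vd, map_add, map_sub, map_mul,
          map_ofNat, eval₂Hom_X', coe_eval₂Hom, eval₂_C, h2D, hft, hfπ,
          Matrix.cons_val_zero, Matrix.cons_val_one, Matrix.cons_val_two,
          Matrix.cons_val_three, Matrix.head_cons, Matrix.tail_cons, Matrix.vecHead,
          Matrix.vecTail] <;>
      (try ring_nf) <;>
      simp [DualNumber.eps_mul_eps, sq, Matrix.vecHead, Matrix.vecTail, mul_assoc,
        mul_comm, mul_left_comm, hee]
  let χb : Fin 3 → (deformationRing O π₀ t s →+* DualNumber kk) := fun j =>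
    Ideal.Quotient.lift _ (χ j) (hχI j)
  have hχb : ∀ j p, χb j (Ideal.Quotient.mk (deformationIdeal O π₀ t s) p) = χ j p :=
    fun j p => Ideal.Quotient.lift_mk _ _ _
  have hfst : ∀ j a, (χb j a).fst = ψ a := by
    intro j a
    obtain ⟨p, rfl⟩ := Ideal.Quotient.mk_surjective a
    rw [hχb, hψ]
    have key : ((TrivSqZeroExt.fstHom kk kk kk).toRingHom.comp (χ j) :
        MvPolynomial (Fin 4) O →+* kk) = mkk.comp constantCoeff := by
      apply MvPolynomial.ringHom_ext
      · intro r; simp [χ, f]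
      · intro i; fin_cases j <;> fin_cases i <;> simp [χ, Vd]
    exact RingHom.congr_fun key p
  have hψm : ∀ a ∈ deformationMaxIdeal O π₀ t s, ψ a = 0 := by
    intro a ha
    rw [← hker] at ha
    exact ha
  have hsnd2 : ∀ j, ∀ z ∈ (deformationMaxIdeal O π₀ t s) ^ 2, (χb j z).snd = 0 := by
    intro j z hz
    rw [pow_two] at hz
    refine Submodule.mul_induction_on hz ?_ ?_
    · intro a ha b hb
      rw [map_mul, TrivSqZeroExt.snd_mul]
      rw [show (χb j a).fst = 0 from by rw [hfst]; exact hψm a ha,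
        show (χb j b).fst = 0 from by rw [hfst]; exact hψm b hb]
      simp
    · intro x y hx hy
      rw [map_add, TrivSqZeroExt.snd_add, hx, hy, add_zero]
  -- linear independence
  have hEind : LinearIndependent
      (deformationRing O π₀ t s ⧸ deformationMaxIdeal O π₀ t s) E := by
    rw [Fintype.linearIndependent_iff]
    intro g hg
    let mky : MvPolynomial (Fin 4) O → deformationRing O π₀ t s :=
      Ideal.Quotient.mk (deformationIdeal O π₀ t s)
    choose a ha using fun i =>
      Ideal.Quotient.mk_surjective (I := deformationMaxIdeal O π₀ t s) (g i)
    have hmemw : a 0 * mky (X 0) +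
        a 1 * mky (X 1) +
        a 2 * mky (X 2) ∈
        deformationMaxIdeal O π₀ t s :=
      add_mem (add_mem (Ideal.mul_mem_left _ _ (hXm 0)) (Ideal.mul_mem_left _ _ (hXm 1)))
        (Ideal.mul_mem_left _ _ (hXm 2))
    have hw : ∑ i, g i • E i = (deformationMaxIdeal O π₀ t s).toCotangent ⟨_, hmemw⟩ := by
      rw [Fin.sum_univ_three, ← ha 0, ← ha 1, ← ha 2]
      rfl
    rw [hw] at hg
    have hmem2 := (Ideal.toCotangent_eq_zero _ _).1 hg
    intro i
    have hsval := hsnd2 i _ hmem2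
    rw [map_add, map_add, map_mul, map_mul, map_mul, TrivSqZeroExt.snd_add,
      TrivSqZeroExt.snd_add, TrivSqZeroExt.snd_mul, TrivSqZeroExt.snd_mul,
      TrivSqZeroExt.snd_mul] at hsval
    rw [show ∀ i', (χb i (Ideal.Quotient.mk (deformationIdeal O π₀ t s) (X i'))).fst = 0 from
      fun i' => by exact (hfst i _).trans (hψm _ (hXm i'))] at hsval
    rw [hχb, hχb, hχb] at hsval
    simp only [χ, coe_eval₂Hom, eval₂_X] at hsval
    fin_cases i <;>
      simp [Vd, Function.comp, Matrix.vecHead, Matrix.vecTail, DualNumber.snd_eps,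
        DualNumber.fst_eps, smul_eq_mul, MulOpposite.smul_eq_mul_unop] at hsval <;>
    · rw [hfst] at hsval
      rw [← ha _, Ideal.Quotient.eq_zero_iff_mem, ← hker]
      exact RingHom.mem_ker.2 hsval
  -- conclusion
  haveI := hmmax
  letI : Field (deformationRing O π₀ t s ⧸ deformationMaxIdeal O π₀ t s) :=
    Ideal.Quotient.field _
  let b : Module.Basis (Fin 3) (deformationRing O π₀ t s ⧸ deformationMaxIdeal O π₀ t s)
      (deformationMaxIdeal O π₀ t s).Cotangent := Module.Basis.mk hEind hspan
  rw [Module.finrank_eq_card_basis b, Fintype.card_fin]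

/-- **Tangent space of the deformation ring of an intersection point, (R-U) case.**
Let `F|ℚ₂` be finite with ring of integers `O_F`, uniformizer `π₀`, and `t ∈ O_F` with
`π₀ ∣ t`, `t ∣ 2`; set `s = t/π₀` and `k = O_F/(π₀)`.  Let
`A = O_F[y₁₁,y₁₂,y₂₁,y₂₂]/I` with `I` as above.  Then the ideal `m` of `A` generated by
`π₀, y₁₁, y₁₂, y₂₁, y₂₂` is maximal with residue field `A/m ≅ k`, and the `k`-vector
space `m/m²` has dimension exactly `3`. -/
theorem deformation_ring_tangent_dim_three
    (F : Type*) [Field F] [Algebra ℚ_[2] F] [FiniteDimensional ℚ_[2] F]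
    [Algebra ℤ_[2] F] [IsScalarTower ℤ_[2] ℚ_[2] F]
    [IsLocalRing (integralClosure ℤ_[2] F)]
    (π₀ t s : integralClosure ℤ_[2] F)
    (hπ₀ : IsLocalRing.maximalIdeal (integralClosure ℤ_[2] F) = Ideal.span {π₀})
    (hπt : π₀ ∣ t) (ht2 : t ∣ 2) (hs : π₀ * s = t) :
    (deformationMaxIdeal (integralClosure ℤ_[2] F) π₀ t s).IsMaximal ∧
    Nonempty
      ((deformationRing (integralClosure ℤ_[2] F) π₀ t s ⧸
          deformationMaxIdeal (integralClosure ℤ_[2] F) π₀ t s) ≃+*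
        ((integralClosure ℤ_[2] F) ⧸
          (Ideal.span {π₀} : Ideal (integralClosure ℤ_[2] F)))) ∧
    Module.finrank
      (deformationRing (integralClosure ℤ_[2] F) π₀ t s ⧸
        deformationMaxIdeal (integralClosure ℤ_[2] F) π₀ t s)
      (deformationMaxIdeal (integralClosure ℤ_[2] F) π₀ t s).Cotangent = 3 := by
  have hmax : (Ideal.span {π₀} : Ideal (integralClosure ℤ_[2] F)).IsMaximal := by
    rw [← hπ₀]
    exact IsLocalRing.maximalIdeal.isMaximal _
  exact deformation_general_aux π₀ t s hmax hπt ht2 hs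

end
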